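/- Assume every symmetric n×n matrix over K is diagonalizable over K. Then every nonsingular P ∈ GL_n(K) admits a decomposition P = O·D·U with O, U orthogonal matrices (OᵀO = I_n, UᵀU = I_n) and D diagonal. -/

import Mathlib

open Matrix
def IsDiagonalizable {K : Type*} [Field K] {m : Type*} [Fintype m] [DecidableEq m]
    (A : Matrix m m K) : Prop :=
  ∃ P : Matrix m m K, IsUnit P ∧ (P⁻¹ * A * P).IsDiag
def FormallyReal (K : Type*) [Field K] : Prop := ¬ IsSumSq (-1 : K)
def Pythagorean (K : Type*) [Field K] : Prop := ∀ a b : K, ∃ c : K, a ^ 2 + b ^ 2 = c ^ 2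

section SVD
open Polynomial
variable {K : Type*} [Field K] {n : ℕ}

lemma sum_ite2 {c1 c2 : Fin n} (h : c1 ≠ c2) (x y : K) (g : Fin n → K) :
    ∑ k, (if k = c1 then x else if k = c2 then y else 0) * g k = x * g c1 + y * g c2 := by
  have : ∀ k, (if k = c1 then x else if k = c2 then y else 0) * g k
      = (if k = c1 then x * g c1 else 0) + (if k = c2 then y * g c2 else 0) := by
    intro k
    by_cases h1 : k = c1 <;> by_cases h2 : k = c2 <;> simp_all
  simp [this, Finset.sum_add_distrib]

/-- The test symmetric matrix. -/
def Aab (i0 i1 : Fin n) (a b : K) : Matrix (Fin n) (Fin n) K :=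
  Matrix.of fun i j =>
    if i = i0 then (if j = i0 then a else if j = i1 then b else 0)
    else if i = i1 then (if j = i0 then b else if j = i1 then -a else 0) else 0

lemma Aab_symm (i0 i1 : Fin n) (a b : K) : (Aab i0 i1 a b).IsSymm := by
  unfold Matrix.IsSymm Aab
  ext i j
  simp only [transpose_apply, of_apply]
  by_cases h1 : i = i0 <;> by_cases h2 : i = i1 <;> by_cases h3 : j = i0 <;>
    by_cases h4 : j = i1 <;> simp_all

/-- Every symmetric matrix diagonalizable (n ≥ 2) implies Pythagorean. -/
lemma pyth_of_hsymm (hn : 2 ≤ n)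
    (hsymm : ∀ A : Matrix (Fin n) (Fin n) K, A.IsSymm → IsDiagonalizable A)
    (a b : K) : ∃ c : K, a ^ 2 + b ^ 2 = c ^ 2 := by
  set i0 : Fin n := ⟨0, by omega⟩ with hi0
  set i1 : Fin n := ⟨1, by omega⟩ with hi1
  have h01 : i0 ≠ i1 := by simp [hi0, hi1, Fin.ext_iff]
  set A := Aab i0 i1 a b with hA
  obtain ⟨Q, hQ, hdiag⟩ := hsymm A (Aab_symm i0 i1 a b)
  have hQd : IsUnit Q.det := (Matrix.isUnit_iff_isUnit_det Q).mp hQ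
  set Dg := Q⁻¹ * A * Q with hDg
  have hAQ : A * Q = Q * Dg := by
    rw [hDg, ← Matrix.mul_assoc, ← Matrix.mul_assoc, Matrix.mul_nonsing_inv _ hQd,
      Matrix.one_mul]
  -- find a column j with Q i0 j ≠ 0 or Q i1 j ≠ 0
  have hcol : ∃ j, Q i0 j ≠ 0 ∨ Q i1 j ≠ 0 := by
    by_contra hc
    push_neg at hc
    have : Q.det = 0 := Matrix.det_eq_zero_of_row_eq_zero i0 (fun j => (hc j).1)
    exact hQd.ne_zero this
  obtain ⟨j, hj⟩ := hcol
  set lam := Dg j j with hlam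
  have hcolj : ∀ i, ∑ k, A i k * Q k j = Q i j * lam := by
    intro i
    have h1 : (A * Q) i j = (Q * Dg) i j := by rw [hAQ]
    rw [Matrix.mul_apply, Matrix.mul_apply] at h1
    rw [h1]
    rw [Finset.sum_eq_single j]
    · intro k _ hk
      rw [hdiag (by simpa using hk), mul_zero]
    · simp
  have e0 : a * Q i0 j + b * Q i1 j = Q i0 j * lam := by
    have h := hcolj i0
    have hr : ∑ k, A i0 k * Q k j
        = ∑ k, (if k = i0 then a else if k = i1 then b else 0) * Q k j :=
      Finset.sum_congr rfl (fun k _ => by simp [hA, Aab])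
    rw [hr, sum_ite2 h01] at h
    exact h
  have e1 : b * Q i0 j + -a * Q i1 j = Q i1 j * lam := by
    have h := hcolj i1
    have hr : ∑ k, A i1 k * Q k j
        = ∑ k, (if k = i0 then b else if k = i1 then -a else 0) * Q k j :=
      Finset.sum_congr rfl (fun k _ => by simp [hA, Aab, h01.symm])
    rw [hr, sum_ite2 h01] at h
    exact h
  refine ⟨lam, ?_⟩
  rcases hj with hj | hj
  · have h : (a ^ 2 + b ^ 2) * Q i0 j = lam ^ 2 * Q i0 j := by
      linear_combination (a + lam) * e0 + b * e1
    exact mul_right_cancel₀ hj h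
  · have h : (a ^ 2 + b ^ 2) * Q i1 j = lam ^ 2 * Q i1 j := by
      linear_combination b * e0 + (lam - a) * e1
    exact mul_right_cancel₀ hj h

/-- Anisotropy in two variables. -/
lemma aniso2_of_hsymm (hn : 2 ≤ n)
    (hsymm : ∀ A : Matrix (Fin n) (Fin n) K, A.IsSymm → IsDiagonalizable A)
    (a b : K) (hab : a ^ 2 + b ^ 2 = 0) : a = 0 ∧ b = 0 := by
  set i0 : Fin n := ⟨0, by omega⟩ with hi0
  set i1 : Fin n := ⟨1, by omega⟩ with hi1
  have h01 : i0 ≠ i1 := by simp [hi0, hi1, Fin.ext_iff]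
  set A := Aab i0 i1 a b with hA
  obtain ⟨Q, hQ, hdiag⟩ := hsymm A (Aab_symm i0 i1 a b)
  have hQd : IsUnit Q.det := (Matrix.isUnit_iff_isUnit_det Q).mp hQ
  set Dg := Q⁻¹ * A * Q with hDg
  -- A * A = 0
  have hA2 : A * A = 0 := by
    ext i j
    rw [Matrix.mul_apply]
    by_cases h1 : i = i0
    · have hr : ∑ k, A i k * A k j
          = ∑ k, (if k = i0 then a else if k = i1 then b else 0) * A k j :=
        Finset.sum_congr rfl (fun k _ => by simp [hA, Aab, h1])
      rw [hr, sum_ite2 h01]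
      by_cases h3 : j = i0 <;> by_cases h4 : j = i1 <;>
        simp_all [hA, Aab, h01.symm] <;> ring_nf <;>
        first
          | (linear_combination hab)
          | skip
    · by_cases h2 : i = i1
      · have hr : ∑ k, A i k * A k j
            = ∑ k, (if k = i0 then b else if k = i1 then -a else 0) * A k j :=
          Finset.sum_congr rfl (fun k _ => by simp [hA, Aab, h1, h2, h01.symm])
        rw [hr, sum_ite2 h01]
        by_cases h3 : j = i0 <;> by_cases h4 : j = i1 <;>
          simp_all [hA, Aab, h01.symm] <;> ring_nf <;>
          first
            | (linear_combination hab)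
            | skip
      · have hr : ∑ k, A i k * A k j = ∑ k, (0 : K) :=
          Finset.sum_congr rfl (fun k _ => by simp [hA, Aab, h1, h2])
        simp [hr]
  -- hence Dg * Dg = 0
  have hD2 : Dg * Dg = 0 := by
    rw [hDg]
    calc Q⁻¹ * A * Q * (Q⁻¹ * A * Q) = Q⁻¹ * (A * (Q * Q⁻¹) * A) * Q := by
          simp only [Matrix.mul_assoc]
      _ = Q⁻¹ * (A * A) * Q := by rw [Matrix.mul_nonsing_inv _ hQd, Matrix.mul_one]
      _ = 0 := by rw [hA2, Matrix.mul_zero, Matrix.zero_mul]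
  -- diagonal entries of Dg vanish
  have hDgzero : Dg = 0 := by
    ext i j
    by_cases hij : i = j
    · subst hij
      have h1 : (Dg * Dg) i i = Dg i i * Dg i i := by
        rw [Matrix.mul_apply, Finset.sum_eq_single i]
        · intro k _ hk; rw [hdiag hk.symm, zero_mul]
        · simp
      rw [hD2] at h1
      have : Dg i i * Dg i i = 0 := h1.symm
      simpa using mul_self_eq_zero.mp this
    · simpa using hdiag hij
  -- hence A = 0
  have hAzero : A = 0 := by
    have := congrArg (fun M => Q * M * Q⁻¹) (hDgzero : Q⁻¹ * A * Q = 0)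
    simp only [Matrix.mul_zero, Matrix.zero_mul] at this
    rwa [← Matrix.mul_assoc, ← Matrix.mul_assoc, Matrix.mul_nonsing_inv _ hQd, Matrix.one_mul,
      Matrix.mul_assoc, Matrix.mul_nonsing_inv _ hQd, Matrix.mul_one] at this
  constructor
  · have := congrFun (congrFun hAzero i0) i0
    simpa [hA, Aab] using this
  · have := congrFun (congrFun hAzero i0) i1
    simpa [hA, Aab, h01, h01.symm] using this

lemma sumsq_is_sq {ι : Type*} (pyth : ∀ a b : K, ∃ c : K, a ^ 2 + b ^ 2 = c ^ 2)
    (s : Finset ι) (v : ι → K) : ∃ c : K, ∑ i ∈ s, v i ^ 2 = c ^ 2 := by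
  classical
  induction s using Finset.cons_induction with
  | empty => exact ⟨0, by simp⟩
  | cons j s hj ih =>
    obtain ⟨c, hc⟩ := ih
    obtain ⟨d, hd⟩ := pyth (v j) c
    exact ⟨d, by rw [Finset.sum_cons, hc, hd]⟩

lemma sumsq_zero {ι : Type*} [DecidableEq ι]
    (pyth : ∀ a b : K, ∃ c : K, a ^ 2 + b ^ 2 = c ^ 2)
    (aniso2 : ∀ a b : K, a ^ 2 + b ^ 2 = 0 → a = 0 ∧ b = 0)
    (s : Finset ι) (v : ι → K) (h : ∑ i ∈ s, v i ^ 2 = 0) : ∀ j ∈ s, v j = 0 := by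
  intro j hj
  obtain ⟨c, hc⟩ := sumsq_is_sq pyth (s.erase j) v
  have : v j ^ 2 + c ^ 2 = 0 := by
    rw [← hc, ← h]
    exact Finset.add_sum_erase s (fun i => v i ^ 2) hj
  exact (aniso2 _ _ this).1



lemma aeval_diagonal (d : Fin n → K) (p : K[X]) :
    Polynomial.aeval (Matrix.diagonal d) p = Matrix.diagonal (fun i => p.eval (d i)) := by
  have h1 : Matrix.diagonal d = Matrix.diagonalAlgHom (α := K) K d := rfl
  rw [h1, Polynomial.aeval_algHom_apply]
  have h2 : (Polynomial.aeval d p : Fin n → K) = fun i => p.eval (d i) := by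
    funext i
    have := Polynomial.aeval_algHom_apply (Pi.evalAlgHom K (fun _ : Fin n => K) i) d p
    simpa [Polynomial.aeval_def] using this.symm
  rw [h2]
  rfl

/-- conjugation by an invertible matrix as an algebra homomorphism -/
noncomputable def conjHom (Q : Matrix (Fin n) (Fin n) K) (hQd : IsUnit Q.det) :
    Matrix (Fin n) (Fin n) K →ₐ[K] Matrix (Fin n) (Fin n) K where
  toFun := fun X => Q * X * Q⁻¹
  map_one' := by show Q * 1 * Q⁻¹ = 1; rw [Matrix.mul_one, Matrix.mul_nonsing_inv _ hQd]
  map_mul' := by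
    intro X Y
    calc Q * (X * Y) * Q⁻¹ = Q * X * ((Q⁻¹ * Q) * (Y * Q⁻¹)) := by
          rw [Matrix.nonsing_inv_mul _ hQd, Matrix.one_mul]
          simp only [Matrix.mul_assoc]
      _ = Q * X * Q⁻¹ * (Q * Y * Q⁻¹) := by simp only [Matrix.mul_assoc]
  map_zero' := by show Q * 0 * Q⁻¹ = 0; rw [Matrix.mul_zero, Matrix.zero_mul]
  map_add' := by intro X Y; show Q * (X + Y) * Q⁻¹ = Q * X * Q⁻¹ + Q * Y * Q⁻¹; rw [Matrix.mul_add, Matrix.add_mul]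
  commutes' := by
    intro c
    show Q * algebraMap K _ c * Q⁻¹ = algebraMap K _ c
    simp only [Algebra.algebraMap_eq_smul_one]
    rw [Matrix.mul_smul, Matrix.mul_one, Matrix.smul_mul, Matrix.mul_nonsing_inv _ hQd]

lemma annihilating_poly (A : Matrix (Fin n) (Fin n) K) (hA : IsDiagonalizable A) :
    ∃ s : Finset K, Polynomial.aeval A (∏ l ∈ s, (X - C l)) = 0 := by
  classical
  obtain ⟨Q, hQ, hdiag⟩ := hA
  have hQd : IsUnit Q.det := (Matrix.isUnit_iff_isUnit_det Q).mp hQ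
  set Dg := Q⁻¹ * A * Q with hDg
  refine ⟨Finset.image (fun i => Dg i i) Finset.univ, ?_⟩
  set p : K[X] := ∏ l ∈ Finset.image (fun i => Dg i i) Finset.univ, (X - C l) with hp
  have hDgd : Polynomial.aeval Dg p = 0 := by
    rw [← hdiag.diagonal_diag, aeval_diagonal]
    have h0 : ∀ i, p.eval (Dg.diag i) = 0 := by
      intro i
      rw [hp, Polynomial.eval_prod]
      refine Finset.prod_eq_zero (Finset.mem_image_of_mem _ (Finset.mem_univ i)) ?_
      simp [Matrix.diag]
    simp only [h0]
    exact Matrix.diagonal_zero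
  have hAeq : A = Q * Dg * Q⁻¹ := by
    rw [hDg, ← Matrix.mul_assoc, ← Matrix.mul_assoc, Matrix.mul_nonsing_inv _ hQd,
      Matrix.one_mul, Matrix.mul_assoc, Matrix.mul_nonsing_inv _ hQd, Matrix.mul_one]
  have hφ : conjHom Q hQd Dg = A := hAeq.symm
  calc Polynomial.aeval A p = Polynomial.aeval (conjHom Q hQd Dg) p := by rw [hφ]
    _ = conjHom Q hQd (Polynomial.aeval Dg p) := by rw [Polynomial.aeval_algHom_apply]
    _ = 0 := by rw [hDgd]; exact map_zero _

lemma symm_dot (A : Matrix (Fin n) (Fin n) K) (hAs : Aᵀ = A) (x y : Fin n → K) :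
    (A *ᵥ x) ⬝ᵥ y = x ⬝ᵥ (A *ᵥ y) := by
  calc (A *ᵥ x) ⬝ᵥ y = y ⬝ᵥ (A *ᵥ x) := dotProduct_comm _ _
    _ = (y ᵥ* A) ⬝ᵥ x := Matrix.dotProduct_mulVec _ _ _
    _ = (Aᵀ *ᵥ y) ⬝ᵥ x := by rw [Matrix.mulVec_transpose]
    _ = (A *ᵥ y) ⬝ᵥ x := by rw [hAs]
    _ = x ⬝ᵥ (A *ᵥ y) := dotProduct_comm _ _

lemma annihilating_list (A : Matrix (Fin n) (Fin n) K) (hA : IsDiagonalizable A) :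
    ∃ L : List K, Polynomial.aeval A ((L.map (fun l => X - C l)).prod) = 0 := by
  obtain ⟨s, hs⟩ := annihilating_poly A hA
  refine ⟨s.toList, ?_⟩
  rw [Finset.prod_map_toList]
  exact hs

lemma eigen_in_complement (A : Matrix (Fin n) (Fin n) K) (hAs : Aᵀ = A)
    (hA : IsDiagonalizable A) {k : ℕ} (hk : k < n) (u : Fin k → (Fin n → K))
    (hlam : ∀ i, ∃ l : K, A *ᵥ u i = l • u i) :
    ∃ w : Fin n → K, w ≠ 0 ∧ (∀ i, w ⬝ᵥ u i = 0) ∧ ∃ l : K, A *ᵥ w = l • w := by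
  classical
  set Φ : (Fin n → K) →ₗ[K] (Fin k → K) :=
    { toFun := fun v => fun i => v ⬝ᵥ u i
      map_add' := by intro x y; funext i; simp [add_dotProduct]
      map_smul' := by intro c x; funext i; simp [smul_dotProduct] } with hΦ
  set W := LinearMap.ker Φ with hW
  have hWmem : ∀ v, v ∈ W ↔ ∀ i, v ⬝ᵥ u i = 0 := by
    intro v
    constructor
    · intro h i
      exact congrFun (LinearMap.mem_ker.mp h) i
    · intro h
      exact LinearMap.mem_ker.mpr (funext h)
  have hWbot : W ≠ ⊥ := by
    intro hbot
    have hrank := LinearMap.finrank_range_add_finrank_ker Φ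
    rw [← hW, hbot, finrank_bot, add_zero] at hrank
    have h1 : Module.finrank K (Fin n → K) = n := by simp
    have h2 : Module.finrank K ↥(LinearMap.range Φ) ≤ k := by
      have := Submodule.finrank_le (LinearMap.range Φ)
      simpa using this
    omega
  obtain ⟨x, hxW, hx0⟩ := (Submodule.ne_bot_iff W).mp hWbot
  set f := Matrix.toLinAlgEquiv' A with hf
  have hfapp : ∀ v, f v = A *ᵥ v := fun v => rfl
  have hinv : ∀ v ∈ W, f v ∈ W := by
    intro v hv
    rw [hWmem] at hv ⊢
    intro i
    obtain ⟨l, hl⟩ := hlam i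
    rw [hfapp, symm_dot A hAs, hl, dotProduct_smul, hv i, smul_zero]
  obtain ⟨L, hsL⟩ := annihilating_list A hA
  have hf0 : ((L.map (fun l => f - algebraMap K _ l)).prod) = 0 := by
    have h1 := Polynomial.aeval_algHom_apply
      (Matrix.toLinAlgEquiv' (R := K) (n := Fin n)).toAlgHom A ((L.map (fun l => X - C l)).prod)
    simp only [AlgEquiv.coe_algHom] at h1
    rw [hsL, map_zero] at h1
    rw [map_list_prod] at h1
    rw [← hf] at h1
    rw [← h1]
    congr 1
    rw [List.map_map]
    refine List.map_congr_left ?_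
    intro l _
    simp [Function.comp, map_sub]
  by_contra hno
  push_neg at hno
  have claim : ∀ L' : List K,
      ((L'.map (fun l => f - algebraMap K _ l)).prod) x ∈ W ∧
      ((L'.map (fun l => f - algebraMap K _ l)).prod) x ≠ 0 := by
    intro L'
    induction L' with
    | nil => simpa using ⟨hxW, hx0⟩
    | cons a L' ih =>
      obtain ⟨hyW, hy0⟩ := ih
      set y := ((L'.map (fun l => f - algebraMap K _ l)).prod) x with hy
      rw [List.map_cons, List.prod_cons, Module.End.mul_apply]
      have hsub' : (f - algebraMap K _ a) y = A *ᵥ y - a • y := by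
        rw [LinearMap.sub_apply, hfapp, Module.algebraMap_end_apply]
      constructor
      · rw [hsub']
        exact Submodule.sub_mem W (hinv y hyW) (Submodule.smul_mem W a hyW)
      · rw [hsub']
        intro hzero
        exact hno y hy0 (fun i => (hWmem y).mp hyW i) a (sub_eq_zero.mp hzero)
  have hcl := (claim L).2
  rw [hf0] at hcl
  exact hcl rfl

lemma onb_eigen (A : Matrix (Fin n) (Fin n) K) (hAs : Aᵀ = A) (hA : IsDiagonalizable A)
    (pyth : ∀ a b : K, ∃ c : K, a ^ 2 + b ^ 2 = c ^ 2)
    (aniso2 : ∀ a b : K, a ^ 2 + b ^ 2 = 0 → a = 0 ∧ b = 0) :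
    ∀ k, k ≤ n → ∃ u : Fin k → (Fin n → K),
      (∀ i j, u i ⬝ᵥ u j = if i = j then (1 : K) else 0) ∧
      (∀ i, ∃ l : K, A *ᵥ u i = l • u i) := by
  intro k
  induction k with
  | zero => exact fun _ => ⟨Fin.elim0, fun i => i.elim0, fun i => i.elim0⟩
  | succ k ih =>
    intro hk1
    obtain ⟨u, hortho, heig⟩ := ih (by omega)
    obtain ⟨w, hw0, horth, l, hl⟩ := eigen_in_complement A hAs hA (by omega) u heig
    -- normalize w
    obtain ⟨c, hc⟩ := sumsq_is_sq pyth Finset.univ w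
    have hww : w ⬝ᵥ w = c ^ 2 := by
      rw [← hc]
      simp [dotProduct, sq]
    have hcne : c ≠ 0 := by
      intro h0
      apply hw0
      funext i
      exact sumsq_zero pyth aniso2 Finset.univ w (by rw [hc, h0]; ring) i (Finset.mem_univ i)
    set v : Fin n → K := c⁻¹ • w with hv
    have hvv : v ⬝ᵥ v = 1 := by
      rw [hv, smul_dotProduct, dotProduct_smul, hww]
      field_simp
      simp only [smul_eq_mul]
      field_simp
    have hvu : ∀ i, v ⬝ᵥ u i = 0 := by
      intro i
      rw [hv, smul_dotProduct, horth i, smul_zero]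
    have hveig : A *ᵥ v = l • v := by
      rw [hv, Matrix.mulVec_smul, hl, smul_comm]
    refine ⟨Fin.cons v u, ?_, ?_⟩
    · intro i j
      refine Fin.cases ?_ (fun i' => ?_) i
      · refine Fin.cases ?_ (fun j' => ?_) j
        · simpa using hvv
        · rw [Fin.cons_zero, Fin.cons_succ, hvu j']
          simp [(Fin.succ_ne_zero j').symm]
      · refine Fin.cases ?_ (fun j' => ?_) j
        · rw [Fin.cons_succ, Fin.cons_zero, dotProduct_comm, hvu i']
          simp [Fin.succ_ne_zero i']
        · rw [Fin.cons_succ, Fin.cons_succ, hortho i' j']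
          simp [Fin.succ_inj]
    · intro i
      refine Fin.cases ?_ (fun i' => ?_) i
      · exact ⟨l, by rw [Fin.cons_zero]; exact hveig⟩
      · obtain ⟨l', hl'⟩ := heig i'
        exact ⟨l', by rw [Fin.cons_succ]; exact hl'⟩

lemma conj_entry (Q M : Matrix (Fin n) (Fin n) K) (i j : Fin n) :
    (Qᵀ * M * Q) i j = (fun k => Q k i) ⬝ᵥ (M *ᵥ fun k => Q k j) := by
  simp only [Matrix.mul_apply, Matrix.transpose_apply, dotProduct, Matrix.mulVec,
    Finset.sum_mul, Finset.mul_sum]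
  rw [Finset.sum_comm]
  refine Finset.sum_congr rfl fun k _ => Finset.sum_congr rfl fun l _ => by ring

lemma spectral (A : Matrix (Fin n) (Fin n) K) (hAs : Aᵀ = A) (hA : IsDiagonalizable A)
    (pyth : ∀ a b : K, ∃ c : K, a ^ 2 + b ^ 2 = c ^ 2)
    (aniso2 : ∀ a b : K, a ^ 2 + b ^ 2 = 0 → a = 0 ∧ b = 0) :
    ∃ Q : Matrix (Fin n) (Fin n) K, Qᵀ * Q = 1 ∧ (Qᵀ * A * Q).IsDiag := by
  obtain ⟨u, hortho, heig⟩ := onb_eigen A hAs hA pyth aniso2 n (le_refl n)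
  refine ⟨Matrix.of fun i j => u j i, ?_, ?_⟩
  · ext i j
    have : ((Matrix.of fun i j => u j i)ᵀ * Matrix.of fun i j => u j i) i j = u i ⬝ᵥ u j := by
      simp [Matrix.mul_apply, dotProduct]
    rw [this, hortho i j, Matrix.one_apply]
  · intro i j hij
    rw [conj_entry]
    obtain ⟨l, hl⟩ := heig j
    have h1 : (fun k => (Matrix.of fun i j => u j i) k i) = u i := rfl
    have h2 : (fun k => (Matrix.of fun i j => u j i) k j) = u j := rfl
    rw [h1, h2, hl, dotProduct_smul, hortho i j]
    simp [hij]

end SVD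
theorem stmt13 {K : Type*} [Field K] {n : ℕ}
    (hsymm : ∀ A : Matrix (Fin n) (Fin n) K, A.IsSymm → IsDiagonalizable A)
    (P : Matrix (Fin n) (Fin n) K) (hP : IsUnit P) :
    ∃ (O D U : Matrix (Fin n) (Fin n) K),
      Oᵀ * O = 1 ∧ Uᵀ * U = 1 ∧ D.IsDiag ∧ P = O * D * U := by
  rcases Nat.lt_or_ge n 2 with hn | hn
  · -- n ≤ 1 : P itself is diagonal
    refine ⟨1, P, 1, by simp, by simp, ?_, by simp⟩
    intro i j hij
    exact absurd (Fin.ext (by omega)) hij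
  · have pyth := pyth_of_hsymm hn hsymm
    have aniso2 := aniso2_of_hsymm hn hsymm
    have hPdet : IsUnit P.det := (Matrix.isUnit_iff_isUnit_det P).mp hP
    set S := Pᵀ * P with hS
    have hSs : Sᵀ = S := by rw [hS, Matrix.transpose_mul, Matrix.transpose_transpose]
    obtain ⟨Q, hQ1, hQdiag⟩ := spectral S hSs (hsymm S hSs) pyth aniso2
    set Λ := Qᵀ * S * Q with hΛ
    have hdetQ : Q.det * Q.det = 1 := by
      have h := congrArg Matrix.det hQ1
      rwa [Matrix.det_mul, Matrix.det_transpose, Matrix.det_one] at h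
    have hQdet : IsUnit Q.det := IsUnit.of_mul_eq_one _ hdetQ
    have hQQt : Q * Qᵀ = 1 := mul_eq_one_comm.mp hQ1
    have hdiagsq : ∀ i, ∃ e : K, Λ i i = e ^ 2 := by
      intro i
      rw [hΛ, conj_entry]
      set q : Fin n → K := fun k => Q k i with hq
      have h1 : q ⬝ᵥ ((Pᵀ * P) *ᵥ q) = (P *ᵥ q) ⬝ᵥ (P *ᵥ q) := by
        rw [← Matrix.mulVec_mulVec, Matrix.dotProduct_mulVec, Matrix.vecMul_transpose]
      obtain ⟨e, he⟩ := sumsq_is_sq pyth Finset.univ (P *ᵥ q)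
      refine ⟨e, ?_⟩
      rw [← hS] at h1
      rw [h1, ← he]
      simp [dotProduct, sq]
    choose e he using hdiagsq
    have hΛdiag : Λ = Matrix.diagonal (fun i => e i ^ 2) := by
      ext i j
      by_cases hij : i = j
      · subst hij; simp [Matrix.diagonal_apply_eq, he i]
      · rw [Matrix.diagonal_apply_ne _ hij]
        exact hQdiag hij
    have hΛunit : IsUnit Λ.det := by
      rw [hΛ, Matrix.det_mul, Matrix.det_mul, hS, Matrix.det_mul, Matrix.det_transpose,
        Matrix.det_transpose]
      exact (hQdet.mul (hPdet.mul hPdet)).mul hQdet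
    have he0 : ∀ i, e i ≠ 0 := by
      intro i
      have h1 : Λ.det = ∏ j, e j ^ 2 := by rw [hΛdiag, Matrix.det_diagonal]
      have h2 : (∏ j, e j ^ 2) ≠ 0 := by rw [← h1]; exact hΛunit.ne_zero
      intro h0
      exact h2 (Finset.prod_eq_zero (Finset.mem_univ i) (by rw [h0]; ring))
    set D := Matrix.diagonal e with hD
    set Di := Matrix.diagonal (fun i => (e i)⁻¹) with hDi
    have hDiD : Di * D = 1 := by
      rw [hD, hDi, Matrix.diagonal_mul_diagonal]
      have : (fun i => (e i)⁻¹ * e i) = fun _ => (1 : K) := by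
        funext i; exact inv_mul_cancel₀ (he0 i)
      rw [this, Matrix.diagonal_one]
    have hDDi : D * Di = 1 := by
      rw [hD, hDi, Matrix.diagonal_mul_diagonal]
      have : (fun i => e i * (e i)⁻¹) = fun _ => (1 : K) := by
        funext i; exact mul_inv_cancel₀ (he0 i)
      rw [this, Matrix.diagonal_one]
    have hΛDD : Λ = D * D := by
      rw [hΛdiag, hD, Matrix.diagonal_mul_diagonal]
      refine congrArg Matrix.diagonal (funext fun i => ?_)
      ring
    refine ⟨P * Q * Di, D, Qᵀ, ?_, ?_, Matrix.isDiag_diagonal e, ?_⟩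
    · -- orthogonality of O
      have hOt : (P * Q * Di)ᵀ = Di * (Qᵀ * Pᵀ) := by
        rw [Matrix.transpose_mul, Matrix.transpose_mul, hDi, Matrix.diagonal_transpose]
      rw [hOt]
      calc Di * (Qᵀ * Pᵀ) * (P * Q * Di) = Di * (Qᵀ * (Pᵀ * P) * Q) * Di := by
            simp only [Matrix.mul_assoc]
        _ = Di * Λ * Di := by rw [← hS, ← hΛ]
        _ = Di * D * (D * Di) := by rw [hΛDD]; simp only [Matrix.mul_assoc]
        _ = 1 := by rw [hDiD, hDDi, Matrix.one_mul]
    · rw [Matrix.transpose_transpose]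
      exact hQQt
    · calc P = P * 1 := by rw [Matrix.mul_one]
        _ = P * (Q * Qᵀ) := by rw [hQQt]
        _ = P * Q * (Di * D) * Qᵀ := by rw [hDiD]; simp only [Matrix.mul_assoc, Matrix.mul_one]
        _ = P * Q * Di * D * Qᵀ := by simp only [Matrix.mul_assoc]
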